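/- For all integers m and n with 2 ≤ m and 2m ≤ n, there exist a digraph D on n vertices with exactly n − m arcs and a digraph D' on n vertices with exactly 2n − ⌊n/m⌋ arcs such that D and D' do not pack. (Consequently μ(n, n−m) ≤ 2n − ⌊n/m⌋.) -/

import Mathlib

/-- A digraph on `Fin n` given by its finite arc set: arcs are ordered pairs
of distinct vertices (irreflexivity). -/
def IsDigraph {n : ℕ} (A : Finset (Fin n × Fin n)) : Prop :=
  ∀ p ∈ A, p.1 ≠ p.2

/-- Two digraphs on `n` vertices pack if there is a bijection of the vertex
sets sending every arc of the first to a non-arc of the second. -/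
def Packs {n : ℕ} (A A' : Finset (Fin n × Fin n)) : Prop :=
  ∃ f : Fin n ≃ Fin n, ∀ p ∈ A, (f p.1, f p.2) ∉ A'

open Finset

/-- The (numerical) center of the star containing vertex `v`, when `Fin n`
is partitioned into `m` in-stars whose centers are `0, k, 2k, …, (m-1)k`. -/
private def ctr (m k v : ℕ) : ℕ := min (v / k) (m - 1) * k

private lemma ctr_lt {m k n : ℕ} (hm : 1 ≤ m) (hk : 1 ≤ k) (hmk : m * k ≤ n) (v : ℕ) :
    ctr m k v < n := by
  have h1 : ctr m k v ≤ (m - 1) * k := Nat.mul_le_mul_right k (min_le_right _ _)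
  have h2 : (m - 1) * k = m * k - k := Nat.sub_one_mul m k
  have h3 : k ≤ m * k := Nat.le_mul_of_pos_left k (by omega)
  omega

private lemma ctr_fix {m k : ℕ} (hk : 0 < k) {j : ℕ} (hj : j < m) :
    ctr m k (j * k) = j * k := by
  unfold ctr
  rw [Nat.mul_div_cancel j hk, min_eq_left (by omega : j ≤ m - 1)]

private lemma ctr_block {m k : ℕ} (hk : 0 < k) {j i : ℕ} (hj : j < m) (hik : i < k) :
    ctr m k (j * k + i) = j * k := by
  unfold ctr
  rw [mul_comm j k, Nat.mul_add_div hk, Nat.div_eq_of_lt hik,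
    Nat.add_zero, min_eq_left (by omega : j ≤ m - 1), mul_comm]

/-- Count pairs whose second coordinate is a function of the first. -/
private lemma card_pairs_fst {n : ℕ} (g : Fin n → Fin n) (P : Fin n → Prop)
    [DecidablePred P] :
    (univ.filter (fun p : Fin n × Fin n => p.2 = g p.1 ∧ P p.1)).card
      = (univ.filter P).card := by
  refine Finset.card_bij' (fun p _ => p.1) (fun x _ => (x, g x)) ?_ ?_ ?_ ?_
  · intro a ha; simp only [mem_filter, mem_univ, true_and] at ha ⊢; exact ha.2
  · intro a ha; simp only [mem_filter, mem_univ, true_and] at ha ⊢; exact ha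
  · intro a ha; simp only [mem_filter, mem_univ, true_and] at ha
    exact Prod.ext_iff.2 ⟨rfl, ha.1.symm⟩
  · intro a ha; rfl

/-- Count pairs whose first coordinate is a fixed vertex. -/
private lemma card_pairs_snd {n : ℕ} (z : Fin n) (P : Fin n → Prop)
    [DecidablePred P] :
    (univ.filter (fun p : Fin n × Fin n => p.1 = z ∧ P p.2)).card
      = (univ.filter P).card := by
  refine Finset.card_bij' (fun p _ => p.2) (fun x _ => (z, x)) ?_ ?_ ?_ ?_
  · intro a ha; simp only [mem_filter, mem_univ, true_and] at ha ⊢; exact ha.2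
  · intro a ha; simp only [mem_filter, mem_univ, true_and] at ha ⊢; exact ha
  · intro a ha; simp only [mem_filter, mem_univ, true_and] at ha
    exact Prod.ext_iff.2 ⟨ha.1.symm, rfl⟩
  · intro a ha; rfl

/-- Reduce counting a filter on `Fin n` by a predicate on values to `range n`. -/
private lemma card_filter_val {n : ℕ} (P : ℕ → Prop) [DecidablePred P] :
    (univ.filter (fun x : Fin n => P x.val)).card
      = ((Finset.range n).filter P).card := by
  refine Finset.card_bij' (fun x _ => x.val)
    (fun x hx => (⟨x, by simp only [mem_filter, mem_range] at hx; exact hx.1⟩ : Fin n))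
    ?_ ?_ ?_ ?_
  · intro a ha; simp only [mem_filter, mem_univ, true_and, mem_range] at ha ⊢
    exact ⟨a.isLt, ha⟩
  · intro a ha; simp only [mem_filter, mem_univ, true_and, mem_range] at ha ⊢
    exact ha.2
  · intro a ha; rfl
  · intro a ha; rfl

/-- For `2 ≤ m ≤ n/2` there exist digraphs on `n` vertices with exactly
`n - m` and `2n - ⌊n/m⌋` arcs, respectively, that do not pack. -/
theorem exists_non_packing (m n : ℕ) (hm : 2 ≤ m) (hn : 2 * m ≤ n) :
    ∃ A A' : Finset (Fin n × Fin n),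
      IsDigraph A ∧ IsDigraph A' ∧ A.card = n - m ∧
      A'.card = 2 * n - n / m ∧ ¬ Packs A A' := by
  set k := n / m with hkdef
  have hk2 : 2 ≤ k := (Nat.le_div_iff_mul_le (by omega)).2 hn
  have hmk : m * k ≤ n := Nat.mul_div_le n m
  have hnpos : 0 < n := by omega
  have hkpos : 0 < k := by omega
  have hkn : k ≤ n := by nlinarith
  have hclt : ∀ v : ℕ, ctr m k v < n := ctr_lt (by omega) (by omega) hmk
  -- the digraph `D`: `m` disjoint in-stars
  set g : Fin n → Fin n := fun v => ⟨ctr m k v.val, hclt v.val⟩ with hg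
  have hgval : ∀ v : Fin n, (g v).val = ctr m k v.val := fun v => rfl
  set A : Finset (Fin n × Fin n) :=
    univ.filter (fun p : Fin n × Fin n => p.2 = g p.1 ∧ p.1 ≠ g p.1) with hA
  -- the digraph `D'`: hub `z = 0` with full out-neighbourhood and in-arcs
  -- from all vertices of value at least `k - 1`
  set z : Fin n := ⟨0, hnpos⟩ with hz
  set A' : Finset (Fin n × Fin n) :=
    univ.filter (fun p : Fin n × Fin n => p.1 = z ∧ p.2 ≠ z)
      ∪ univ.filter (fun p : Fin n × Fin n => p.2 = z ∧ k - 1 ≤ p.1.val) with hA'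
  refine ⟨A, A', ?_, ?_, ?_, ?_, ?_⟩
  · -- IsDigraph A
    intro p hp
    rw [hA, mem_filter] at hp
    rw [hp.2.1]
    exact hp.2.2
  · -- IsDigraph A'
    intro p hp
    rw [hA', mem_union, mem_filter, mem_filter] at hp
    rcases hp with ⟨-, h1, h2⟩ | ⟨-, h1, h2⟩
    · rw [h1]; exact fun h => h2 h.symm
    · intro h
      have hv : p.1.val = 0 := congrArg Fin.val (h.trans h1)
      omega
  · -- |A| = n - m
    rw [hA, card_pairs_fst g (fun v => v ≠ g v)]
    have hsplit := Finset.card_filter_add_card_filter_not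
      (s := (univ : Finset (Fin n))) (p := fun v : Fin n => v = g v)
    have hcent : (univ.filter (fun v : Fin n => v = g v)).card = m := by
      have he : (univ.filter (fun v : Fin n => v = g v))
          = univ.filter (fun x : Fin n => x.val = ctr m k x.val) := by
        apply Finset.filter_congr
        intro x _
        simp only [Fin.ext_iff, hgval]
      have hc2 : (univ.filter (fun x : Fin n => x.val = ctr m k x.val)).card
          = ((Finset.range n).filter (fun t => t = ctr m k t)).card :=
        card_filter_val (fun t => t = ctr m k t)
      rw [he, hc2]
      have he2 : ((Finset.range n).filter (fun t => t = ctr m k t))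
          = (Finset.range m).image (· * k) := by
        ext a
        simp only [mem_filter, mem_range, mem_image]
        constructor
        · rintro ⟨han, hac⟩
          refine ⟨min (a / k) (m - 1), ?_, hac.symm⟩
          have := min_le_right (a / k) (m - 1); omega
        · rintro ⟨j, hj, rfl⟩
          have h1 := ctr_fix (m := m) hkpos hj
          have h2 := hclt (j * k)
          exact ⟨by omega, h1.symm⟩
      rw [he2, Finset.card_image_of_injective _
        (fun a b h => Nat.eq_of_mul_eq_mul_right hkpos h), Finset.card_range]
    have hcardu : (univ : Finset (Fin n)).card = n := by
      rw [Finset.card_univ, Fintype.card_fin]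
    have he3 : (univ.filter (fun v : Fin n => v ≠ g v))
        = univ.filter (fun v : Fin n => ¬ v = g v) := rfl
    rw [he3]
    omega
  · -- |A'| = 2n - k
    have hdisj : Disjoint
        (univ.filter (fun p : Fin n × Fin n => p.1 = z ∧ p.2 ≠ z))
        (univ.filter (fun p : Fin n × Fin n => p.2 = z ∧ k - 1 ≤ p.1.val)) := by
      rw [Finset.disjoint_left]
      intro p hp1 hp2
      rw [mem_filter] at hp1 hp2
      exact hp1.2.2 hp2.2.1
    rw [hA', Finset.card_union_of_disjoint hdisj,
      card_pairs_snd z (fun x => x ≠ z),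
      card_pairs_fst (fun _ => z) (fun x => k - 1 ≤ x.val)]
    have h1 : (univ.filter (fun x : Fin n => x ≠ z)).card = n - 1 := by
      rw [Finset.filter_ne', Finset.card_erase_of_mem (mem_univ z),
        Finset.card_univ, Fintype.card_fin]
    have h2 : (univ.filter (fun x : Fin n => k - 1 ≤ x.val)).card = n - (k - 1) := by
      have h2a : (univ.filter (fun x : Fin n => k - 1 ≤ x.val)).card
          = ((Finset.range n).filter (fun t => k - 1 ≤ t)).card :=
        card_filter_val (fun t => k - 1 ≤ t)
      rw [h2a]
      have he2 : ((Finset.range n).filter (fun t => k - 1 ≤ t)) = Finset.Ico (k - 1) n := by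
        ext a
        simp only [mem_filter, mem_range, Finset.mem_Ico]
        omega
      rw [he2, Nat.card_Ico]
    rw [h1, h2]
    omega
  · -- no packing
    rintro ⟨f, hf⟩
    set w : Fin n := f.symm z with hw
    have hfw : f w = z := Equiv.apply_symm_apply f z
    -- step 1: w is a star center
    have hwc : w = g w := by
      by_contra hne
      have harc : (w, g w) ∈ A := by
        rw [hA, mem_filter]
        exact ⟨mem_univ _, rfl, hne⟩
      apply hf _ harc
      rw [hA']
      apply mem_union_left
      rw [mem_filter]
      refine ⟨mem_univ _, hfw, ?_⟩
      intro h
      exact hne (f.injective (h.trans hfw.symm)).symm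
    obtain ⟨j, hjm, hwval⟩ : ∃ j, j < m ∧ w.val = j * k := by
      refine ⟨min (w.val / k) (m - 1), ?_, ?_⟩
      · have := min_le_right (w.val / k) (m - 1); omega
      · have := congrArg Fin.val hwc
        rw [hgval] at this
        exact this
    -- B : the in-neighbours of w in D
    set B : Finset (Fin n) := univ.filter (fun v : Fin n => g v = w ∧ v ≠ w) with hB
    -- T : potential images of in-neighbours of w
    set T : Finset (Fin n) := univ.filter (fun x : Fin n => x.val ≠ 0 ∧ x.val < k - 1)
      with hT
    have hBn : ∀ i, 0 < i → i < k → j * k + i < n := by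
      intro i hi0 hik
      have h1 : j * k + i ≤ (m - 1) * k + i := by
        have := Nat.mul_le_mul_right k (by omega : j ≤ m - 1); omega
      have h2 : (m - 1) * k = m * k - k := Nat.sub_one_mul m k
      have h3 : k ≤ m * k := Nat.le_mul_of_pos_left k (by omega)
      omega
    have hBcard : k - 1 ≤ B.card := by
      have hcc := Finset.card_le_card_of_injOn
        (f := fun i : ℕ => (⟨(j * k + i) % n, Nat.mod_lt _ hnpos⟩ : Fin n))
        (s := Finset.Ico 1 k) (t := B) ?_ ?_
      · rwa [Nat.card_Ico] at hcc
      · intro i hi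
        rw [Finset.mem_coe, Finset.mem_Ico] at hi
        have hlt : j * k + i < n := hBn i (by omega) hi.2
        have hmod : (j * k + i) % n = j * k + i := Nat.mod_eq_of_lt hlt
        rw [Finset.mem_coe, hB, mem_filter]
        refine ⟨mem_univ _, ?_, ?_⟩
        · apply Fin.ext
          rw [hgval]
          simp only [hmod]
          rw [ctr_block hkpos hjm hi.2, hwval]
        · intro h
          have := congrArg Fin.val h
          simp only [hmod] at this
          omega
      · intro a ha b hb hab
        rw [Finset.mem_coe, Finset.mem_Ico] at ha hb
        have hal : j * k + a < n := hBn a (by omega) ha.2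
        have hbl : j * k + b < n := hBn b (by omega) hb.2
        have := congrArg Fin.val hab
        simp only [Nat.mod_eq_of_lt hal, Nat.mod_eq_of_lt hbl] at this
        omega
    have hTcard : T.card = k - 2 := by
      have hT1 : T.card = ((Finset.range n).filter (fun t => t ≠ 0 ∧ t < k - 1)).card :=
        card_filter_val (fun t => t ≠ 0 ∧ t < k - 1)
      have he2 : ((Finset.range n).filter (fun t => t ≠ 0 ∧ t < k - 1))
          = Finset.Ico 1 (k - 1) := by
        ext a
        simp only [mem_filter, mem_range, Finset.mem_Ico]
        omega
      rw [hT1, he2, Nat.card_Ico]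
      omega
    have hmap : ∀ v ∈ B, f v ∈ T := by
      intro v hv
      rw [hB, mem_filter] at hv
      obtain ⟨-, hgv, hvw⟩ := hv
      have harc : (v, w) ∈ A := by
        rw [hA, mem_filter]
        refine ⟨mem_univ _, hgv.symm, ?_⟩
        rw [← hgv] at hvw
        exact hvw
      have hnotin := hf _ harc
      rw [hfw, hA', mem_union, mem_filter, mem_filter] at hnotin
      push_neg at hnotin
      have hfvz : f v ≠ z := by
        intro h
        exact hvw (f.injective (h.trans hfw.symm))
      have hlt : (f v).val < k - 1 := hnotin.2 (mem_univ _) rfl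
      rw [hT, mem_filter]
      exact ⟨mem_univ _, fun h => hfvz (Fin.ext h), hlt⟩
    have hfin := Finset.card_le_card_of_injOn f hmap (f.injective.injOn)
    omega
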